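/- For every α > 0 and every n ≥ 1, u_n(α) = (2n − 1) · u_{n−1}(α) + α · ∑_{i=0}^{n−1} u_i(α) · u_{n−1−i}(α), and u_0(α) = 1. -/

import Mathlib

/-- The `N × N` real symmetric tridiagonal matrix with zero diagonal and
off-diagonal entries `M_{k,k+1} = M_{k+1,k} = √(α + k + 1)` for `0 ≤ k ≤ N - 2`. -/
noncomputable def jacobiM (α : ℝ) (N : ℕ) : Matrix (Fin N) (Fin N) ℝ := fun i j =>
  if (i : ℕ) + 1 = (j : ℕ) then Real.sqrt (α + (i : ℕ) + 1)
  else if (j : ℕ) + 1 = (i : ℕ) then Real.sqrt (α + (j : ℕ) + 1)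
  else 0

/-- `u n (α) = A_α^{2n}(1,1)`, computed as the `(0,0)` entry of the `2n`-th power of the
`(n+1) × (n+1)` truncation of the Jacobi matrix `A_α`. -/
noncomputable def u (α : ℝ) (n : ℕ) : ℝ := ((jacobiM α (n + 1)) ^ (2 * n)) 0 0




noncomputable def Lmat (α : ℝ) (N : ℕ) : Matrix (Fin N) (Fin N) ℝ := fun i j =>
  if (j : ℕ) + 1 = (i : ℕ) then Real.sqrt (α + (j : ℕ) + 1) else 0

noncomputable def Rmat (α : ℝ) (N : ℕ) : Matrix (Fin N) (Fin N) ℝ := fun i j =>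
  if (i : ℕ) + 1 = (j : ℕ) then Real.sqrt (α + (i : ℕ) + 1) else 0

lemma jacobi_split (α : ℝ) (N : ℕ) : jacobiM α N = Lmat α N + Rmat α N := by
  funext i j
  simp only [jacobiM, Lmat, Rmat, Matrix.add_apply]
  split_ifs <;> first | omega | ring

lemma jacobi_ne (α : ℝ) (N : ℕ) (i j : Fin N) (h1 : (i:ℕ) + 1 ≠ (j:ℕ))
    (h2 : (j:ℕ) + 1 ≠ (i:ℕ)) : jacobiM α N i j = 0 := by
  simp [jacobiM, h1, h2]

/-- band: entries of M^m vanish if the column exceeds the row by more than m -/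
lemma jacobi_band (α : ℝ) : ∀ (m N : ℕ) (i k : Fin N), (i:ℕ) + m < (k:ℕ) →
    ((jacobiM α N) ^ m) i k = 0 := by
  intro m
  induction m with
  | zero =>
    intro N i k h
    rw [pow_zero, Matrix.one_apply_ne]
    intro e; subst e; omega
  | succ m ih =>
    intro N i k h
    rw [pow_succ', Matrix.mul_apply]
    apply Finset.sum_eq_zero
    intro t _
    by_cases h1 : (i:ℕ) + 1 = (t:ℕ)
    · rw [ih N t k (by omega), mul_zero]
    by_cases h2 : (t:ℕ) + 1 = (i:ℕ)
    · rw [ih N t k (by omega), mul_zero]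
    · rw [jacobi_ne α N i t h1 h2, zero_mul]

lemma jacobi_symm (α : ℝ) (N : ℕ) : (jacobiM α N).transpose = jacobiM α N := by
  funext i j
  simp only [Matrix.transpose_apply, jacobiM]
  split_ifs <;> first | rfl | omega

lemma jacobi_pow_symm (α : ℝ) (N m : ℕ) (i k : Fin N) :
    ((jacobiM α N) ^ m) i k = ((jacobiM α N) ^ m) k i := by
  have := Matrix.transpose_pow (jacobiM α N) m
  rw [jacobi_symm] at this
  conv_lhs => rw [← this]
  rw [Matrix.transpose_apply]

lemma jacobi_band' (α : ℝ) (m N : ℕ) (i k : Fin N) (h : (k:ℕ) + m < (i:ℕ)) :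
    ((jacobiM α N) ^ m) i k = 0 := by
  rw [jacobi_pow_symm]; exact jacobi_band α m N k i h


/-- parity: entries of M^m vanish when m + i + j is odd -/
lemma jacobi_parity (α : ℝ) : ∀ (m N : ℕ) (i k : Fin N), (m + (i:ℕ) + (k:ℕ)) % 2 = 1 →
    ((jacobiM α N) ^ m) i k = 0 := by
  intro m
  induction m with
  | zero =>
    intro N i k h
    rw [pow_zero, Matrix.one_apply_ne]
    intro e; subst e; omega
  | succ m ih =>
    intro N i k h
    rw [pow_succ', Matrix.mul_apply]
    apply Finset.sum_eq_zero
    intro t _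
    by_cases h1 : (i:ℕ) + 1 = (t:ℕ)
    · rw [ih N t k (by omega), mul_zero]
    by_cases h2 : (t:ℕ) + 1 = (i:ℕ)
    · rw [ih N t k (by omega), mul_zero]
    · rw [jacobi_ne α N i t h1 h2, zero_mul]

lemma sum_castLE {N N' : ℕ} (h : N ≤ N') (P : Fin N' → ℝ) (h0 : ∀ t : Fin N', N ≤ (t:ℕ) → P t = 0) :
    ∑ t, P t = ∑ t : Fin N, P (Fin.castLE h t) := by
  obtain ⟨d, rfl⟩ : ∃ d, N' = N + d := ⟨N' - N, by omega⟩
  rw [Fin.sum_univ_add]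
  have h1 : ∀ t : Fin d, P (Fin.natAdd N t) = 0 := fun t => h0 _ (Nat.le_add_right N t)
  simp only [h1, Finset.sum_const_zero, add_zero]
  apply Finset.sum_congr rfl
  intro t _
  rfl

lemma jacobi_castLE (α : ℝ) {N N' : ℕ} (h : N ≤ N') (i t : Fin N) :
    jacobiM α N' (Fin.castLE h i) (Fin.castLE h t) = jacobiM α N i t := by
  simp [jacobiM]

/-- truncation independence -/
lemma jacobi_cut (α : ℝ) : ∀ (m N N' : ℕ) (h : N ≤ N') (i k : Fin N),
    (i:ℕ) + (k:ℕ) + m < 2*N →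
    ((jacobiM α N') ^ m) (Fin.castLE h i) (Fin.castLE h k) = ((jacobiM α N) ^ m) i k := by
  intro m
  induction m with
  | zero =>
    intro N N' h i k _
    rw [pow_zero, pow_zero]
    by_cases e : i = k
    · subst e; simp
    · rw [Matrix.one_apply_ne e, Matrix.one_apply_ne]
      intro e'
      exact e (by ext; exact Fin.val_eq_of_eq e' ▸ rfl)
  | succ m ih =>
    intro N N' h i k hik
    rw [pow_succ', Matrix.mul_apply, pow_succ', Matrix.mul_apply]
    rw [sum_castLE h (fun t => jacobiM α N' (Fin.castLE h i) t * ((jacobiM α N')^m) t (Fin.castLE h k))]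
    · apply Finset.sum_congr rfl
      intro t _
      by_cases h1 : (i:ℕ) + 1 = (t:ℕ)
      · rw [jacobi_castLE α h, ih N N' h t k (by omega)]
      by_cases h2 : (t:ℕ) + 1 = (i:ℕ)
      · rw [jacobi_castLE α h, ih N N' h t k (by omega)]
      · rw [jacobi_ne α N i t h1 h2,
            jacobi_ne α N' (Fin.castLE h i) (Fin.castLE h t) (by simpa using h1) (by simpa using h2),
            zero_mul, zero_mul]
    · intro t ht
      by_cases h1 : (i:ℕ) + 1 = (t:ℕ)
      · have : (k:ℕ) + m < (t:ℕ) := by omega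
        rw [jacobi_band' α m N' t (Fin.castLE h k) (by simpa using this), mul_zero]
      by_cases h2 : (t:ℕ) + 1 = (i:ℕ)
      · exfalso; omega
      · rw [jacobi_ne α N' (Fin.castLE h i) t (by simpa using h1) (by simpa using h2), zero_mul]



lemma LR_apply (α : ℝ) (hα : 0 ≤ α) (N : ℕ) (i j : Fin N) :
    (Lmat α N * Rmat α N) i j =
      if (i:ℕ) = (j:ℕ) ∧ 1 ≤ (i:ℕ) then α + (i:ℕ) else 0 := by
  rw [Matrix.mul_apply]
  by_cases hij : (i:ℕ) = (j:ℕ) ∧ 1 ≤ (i:ℕ)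
  · rw [if_pos hij]
    have hk : (i:ℕ) - 1 < N := by omega
    set k₀ : Fin N := ⟨(i:ℕ) - 1, hk⟩ with hk₀def
    have hk₀ : (k₀:ℕ) = (i:ℕ) - 1 := rfl
    rw [Finset.sum_eq_single k₀]
    · simp only [Lmat, Rmat]
      rw [if_pos (by omega), if_pos (by omega)]
      rw [Real.mul_self_sqrt (by positivity)]
      rw [Nat.cast_sub hij.2]
      push_cast
      ring
    · intro b _ hb
      simp only [Lmat, Rmat]
      by_cases h1 : (b:ℕ) + 1 = (i:ℕ)
      · exfalso; exact hb (by ext; omega)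
      · rw [if_neg h1, zero_mul]
    · intro h; exact absurd (Finset.mem_univ _) h
  · rw [if_neg hij]
    apply Finset.sum_eq_zero
    intro b _
    simp only [Lmat, Rmat]
    by_cases h1 : (b:ℕ) + 1 = (i:ℕ)
    · by_cases h2 : (b:ℕ) + 1 = (j:ℕ)
      · exact absurd ⟨by omega, by omega⟩ hij
      · rw [if_neg h2, mul_zero]
    · rw [if_neg h1, zero_mul]

lemma RL_apply (α : ℝ) (hα : 0 ≤ α) (N : ℕ) (i j : Fin N) :
    (Rmat α N * Lmat α N) i j =
      if (i:ℕ) = (j:ℕ) ∧ (i:ℕ) + 1 < N then α + (i:ℕ) + 1 else 0 := by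
  rw [Matrix.mul_apply]
  by_cases hij : (i:ℕ) = (j:ℕ) ∧ (i:ℕ) + 1 < N
  · rw [if_pos hij]
    set k₀ : Fin N := ⟨(i:ℕ) + 1, hij.2⟩ with hk₀def
    have hk₀ : (k₀:ℕ) = (i:ℕ) + 1 := rfl
    rw [Finset.sum_eq_single k₀]
    · simp only [Lmat, Rmat]
      rw [if_pos hk₀.symm, if_pos (by omega : (j:ℕ) + 1 = (k₀:ℕ))]
      rw [← hij.1]
      rw [Real.mul_self_sqrt (by positivity)]
    · intro b _ hb
      simp only [Lmat, Rmat]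
      by_cases h1 : (i:ℕ) + 1 = (b:ℕ)
      · exfalso; exact hb (by ext; omega)
      · rw [if_neg h1, zero_mul]
    · intro h; exact absurd (Finset.mem_univ _) h
  · rw [if_neg hij]
    apply Finset.sum_eq_zero
    intro b _
    simp only [Lmat, Rmat]
    by_cases h1 : (i:ℕ) + 1 = (b:ℕ)
    · by_cases h2 : (j:ℕ) + 1 = (b:ℕ)
      · exact absurd ⟨by omega, by omega⟩ hij
      · rw [if_neg h2, mul_zero]
    · rw [if_neg h1, zero_mul]

lemma telescope {N : ℕ} (M L C : Matrix (Fin N) (Fin N) ℝ) (hC : M * L = L * M + C) :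
    ∀ m : ℕ, M ^ m * L = L * M ^ m + ∑ j ∈ Finset.range m, M ^ j * C * M ^ (m - 1 - j) := by
  intro m
  induction m with
  | zero => simp
  | succ m ih =>
    have h1 : M ^ (m+1) * L = M ^ m * (M * L) := by rw [pow_succ, mul_assoc]
    rw [h1, hC, mul_add, ← mul_assoc, ih, add_mul, Finset.sum_range_succ]
    have h2 : ∀ j ∈ Finset.range m,
        (M ^ j * C * M ^ (m - 1 - j)) * M = M ^ j * C * M ^ (m + 1 - 1 - j) := by
      intro j hj
      rw [Finset.mem_range] at hj
      rw [mul_assoc, ← pow_succ]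
      congr 2
      omega
    rw [Finset.sum_mul, Finset.sum_congr rfl h2]
    have h4 : L * M ^ m * M = L * M ^ (m + 1) := by rw [mul_assoc, ← pow_succ]
    have h3 : M ^ m * C * M ^ (m + 1 - 1 - m) = M ^ m * C := by simp
    rw [h4, h3, add_assoc]


lemma comm_apply (α : ℝ) (hα : 0 ≤ α) (N : ℕ) (s t : Fin N) :
    (Rmat α N * Lmat α N - Lmat α N * Rmat α N) s t =
      if s = t then
        ((if (s:ℕ)+1 < N then α+(s:ℕ)+1 else 0) - (if 1 ≤ (s:ℕ) then α+(s:ℕ) else 0))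
      else 0 := by
  rw [Matrix.sub_apply, RL_apply α hα, LR_apply α hα]
  by_cases hst : s = t
  · subst hst
    simp
  · rw [if_neg hst]
    have hst' : ¬((s:ℕ) = (t:ℕ)) := fun h => hst (Fin.ext h)
    rw [if_neg (by tauto), if_neg (by tauto)]
    ring

lemma comm_entry (α : ℝ) (hα : 0 ≤ α) (N : ℕ) (hN : 2 ≤ N)
    (A B : Matrix (Fin N) (Fin N) ℝ) (z e : Fin N) (hz : (z:ℕ) = 0) (he : (e:ℕ) = N - 1) :
    (A * (Rmat α N * Lmat α N - Lmat α N * Rmat α N) * B) z z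
      = (A * B) z z + α * (A z z * B z z) - (α + (N:ℝ)) * (A z e * B e z) := by
  have hAC : ∀ t : Fin N, (A * (Rmat α N * Lmat α N - Lmat α N * Rmat α N)) z t =
      A z t * ((if (t:ℕ)+1 < N then α+(t:ℕ)+1 else 0) - (if 1 ≤ (t:ℕ) then α+(t:ℕ) else 0)) := by
    intro t
    rw [Matrix.mul_apply, Finset.sum_eq_single t]
    · rw [comm_apply α hα, if_pos rfl]
    · intro b _ hb
      rw [comm_apply α hα, if_neg hb, mul_zero]
    · intro h; exact absurd (Finset.mem_univ _) h
  rw [Matrix.mul_apply]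
  simp only [hAC]
  have key : ∀ t : Fin N,
      A z t * ((if (t:ℕ)+1 < N then α+(t:ℕ)+1 else 0) - (if 1 ≤ (t:ℕ) then α+(t:ℕ) else 0)) * B t z
      = A z t * B t z + (if t = z then α * (A z t * B t z) else 0)
        - (if t = e then (α + (N:ℝ)) * (A z t * B t z) else 0) := by
    intro t
    by_cases h1 : (t:ℕ) = 0
    · have htz : t = z := Fin.ext (by omega)
      have hte : t ≠ e := fun h => by rw [h, he] at h1; omega
      rw [if_pos htz, if_neg hte,
        if_pos (show (t:ℕ) + 1 < N by omega), if_neg (show ¬(1 ≤ (t:ℕ)) by omega)]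
      simp [h1]
      ring
    · by_cases h2 : (t:ℕ) = N - 1
      · have hte : t = e := Fin.ext (by omega)
        have htz : t ≠ z := fun h => by rw [h, hz] at h1; omega
        rw [if_pos hte, if_neg htz,
          if_neg (show ¬((t:ℕ) + 1 < N) by omega), if_pos (show 1 ≤ (t:ℕ) by omega)]
        have hcast : (((t:ℕ)):ℝ) = (N:ℝ) - 1 := by
          rw [h2, Nat.cast_sub (by omega : 1 ≤ N), Nat.cast_one]
        rw [hcast]
        ring
      · have htz : t ≠ z := fun h => by rw [h, hz] at h1; omega
        have hte : t ≠ e := fun h => by rw [h, he] at h2; omega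
        rw [if_neg htz, if_neg hte,
          if_pos (show (t:ℕ) + 1 < N by omega), if_pos (show 1 ≤ (t:ℕ) by omega)]
        ring
  rw [Finset.sum_congr rfl (fun t _ => key t), Finset.sum_sub_distrib, Finset.sum_add_distrib,
    Finset.sum_ite_eq' Finset.univ z, Finset.sum_ite_eq' Finset.univ e,
    if_pos (Finset.mem_univ z), if_pos (Finset.mem_univ e), Matrix.mul_apply]


lemma mom_eq_u (α : ℝ) (n i : ℕ) (hi : i ≤ n) :
    ((jacobiM α (n+1)) ^ (2*i)) 0 0 = u α i := by
  have hc := jacobi_cut α (2*i) (i+1) (n+1) (by omega) ⟨0, Nat.succ_pos i⟩ ⟨0, Nat.succ_pos i⟩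
    (show (0:ℕ) + 0 + 2*i < 2*(i+1) by omega)
  have e1 : Fin.castLE (show i+1 ≤ n+1 by omega) (⟨0, Nat.succ_pos i⟩ : Fin (i+1))
      = (0 : Fin (n+1)) := by ext; simp
  have e2 : (0 : Fin (i+1)) = (⟨0, Nat.succ_pos i⟩ : Fin (i+1)) := by ext; simp
  rw [u, e2, ← hc, e1]

lemma sum_range_even (g : ℕ → ℝ) (n : ℕ) (hodd : ∀ j, j % 2 = 1 → g j = 0) :
    ∑ j ∈ Finset.range (2*n), g j = ∑ i ∈ Finset.range n, g (2*i) := by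
  induction n with
  | zero => simp
  | succ n ih =>
    have h1 : 2*(n+1) = (2*n)+1+1 := by ring
    rw [h1, Finset.sum_range_succ, Finset.sum_range_succ, Finset.sum_range_succ, ih,
      hodd (2*n+1) (by omega), add_zero]

theorem u_self_convolutive_rec (α : ℝ) (hα : 0 < α) :
    (∀ n : ℕ, 1 ≤ n →
      u α n = (2 * (n : ℝ) - 1) * u α (n - 1)
        + α * ∑ i ∈ Finset.range n, u α i * u α (n - 1 - i)) ∧
    u α 0 = 1 := by
  have hα' : (0:ℝ) ≤ α := hα.le
  constructor
  · intro n hn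
    obtain ⟨e, he⟩ : ∃ e : Fin (n+1), (e:ℕ) = n := ⟨⟨n, by omega⟩, rfl⟩
    -- abbreviations (fully explicit)
    have hC : jacobiM α (n+1) * Lmat α (n+1) = Lmat α (n+1) * jacobiM α (n+1)
        + (Rmat α (n+1) * Lmat α (n+1) - Lmat α (n+1) * Rmat α (n+1)) := by
      rw [jacobi_split]
      noncomm_ring
    have htel := telescope (jacobiM α (n+1)) (Lmat α (n+1))
      (Rmat α (n+1) * Lmat α (n+1) - Lmat α (n+1) * Rmat α (n+1)) hC (2*n-1)
    have hR0 : ((jacobiM α (n+1)) ^ (2*n-1) * Rmat α (n+1)) 0 0 = 0 := by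
      rw [Matrix.mul_apply]
      apply Finset.sum_eq_zero
      intro t _
      have : Rmat α (n+1) t 0 = 0 := by
        rw [Rmat, if_neg (by simp)]
      rw [this, mul_zero]
    have hL0 : (Lmat α (n+1) * (jacobiM α (n+1)) ^ (2*n-1)) 0 0 = 0 := by
      rw [Matrix.mul_apply]
      apply Finset.sum_eq_zero
      intro t _
      have : Lmat α (n+1) 0 t = 0 := by
        rw [Lmat, if_neg (by simp)]
      rw [this, zero_mul]
    have key : ∀ j ∈ Finset.range (2*n-1),
        ((jacobiM α (n+1)) ^ j
          * (Rmat α (n+1) * Lmat α (n+1) - Lmat α (n+1) * Rmat α (n+1))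
          * (jacobiM α (n+1)) ^ (2*n-1-1-j)) 0 0
        = u α (n-1) + α * (((jacobiM α (n+1))^j) 0 0 * ((jacobiM α (n+1))^(2*n-2-j)) 0 0) := by
      intro j hj
      rw [Finset.mem_range] at hj
      rw [show 2*n-1-1-j = 2*n-2-j from by omega]
      rw [comm_entry α hα' (n+1) (by omega) _ _ 0 e (by simp) (by simp [he])]
      have hb : ((jacobiM α (n+1))^j) 0 e * ((jacobiM α (n+1))^(2*n-2-j)) e 0 = 0 := by
        by_cases hj2 : j ≤ n - 1
        · rw [jacobi_band α j (n+1) 0 e (by simp [he]; omega), zero_mul]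
        · rw [jacobi_band' α (2*n-2-j) (n+1) e 0 (by simp [he]; omega), mul_zero]
      rw [hb, mul_zero, sub_zero, ← pow_add, show j + (2*n-2-j) = 2*(n-1) from by omega,
        mom_eq_u α n (n-1) (by omega)]
    have hg : ∑ j ∈ Finset.range (2*n-1),
        (((jacobiM α (n+1))^j) 0 0 * ((jacobiM α (n+1))^(2*n-2-j)) 0 0)
        = ∑ i ∈ Finset.range n, u α i * u α (n-1-i) := by
      set g : ℕ → ℝ :=
        fun j => ((jacobiM α (n+1))^j) 0 0 * ((jacobiM α (n+1))^(2*n-2-j)) 0 0 with hgdef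
      have hodd : ∀ j, j % 2 = 1 → g j = 0 := by
        intro j hjo
        have : ((jacobiM α (n+1))^j) 0 0 = 0 :=
          jacobi_parity α j (n+1) 0 0 (by simpa using hjo)
        rw [hgdef]
        simp only [this, zero_mul]
      have h2 : ∑ j ∈ Finset.range (2*n), g j
          = ∑ j ∈ Finset.range (2*n-1), g j + g (2*n-1) := by
        have hx := Finset.sum_range_succ g (2*n-1)
        rw [show (2*n-1)+1 = 2*n from by omega] at hx
        exact hx
      have h3 := sum_range_even g n hodd
      have h4 : g (2*n-1) = 0 := hodd _ (by omega)
      have h5 : ∀ i ∈ Finset.range n, g (2*i) = u α i * u α (n-1-i) := by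
        intro i hi
        rw [Finset.mem_range] at hi
        rw [hgdef]
        simp only
        rw [mom_eq_u α n i (by omega), show 2*n-2-2*i = 2*(n-1-i) from by omega,
          mom_eq_u α n (n-1-i) (by omega)]
      calc ∑ j ∈ Finset.range (2*n-1), g j
          = ∑ j ∈ Finset.range (2*n), g j := by rw [h2, h4, add_zero]
        _ = ∑ i ∈ Finset.range n, g (2*i) := h3
        _ = ∑ i ∈ Finset.range n, u α i * u α (n-1-i) := Finset.sum_congr rfl h5
    have hsplit : (jacobiM α (n+1)) ^ (2*n)
        = (jacobiM α (n+1)) ^ (2*n-1) * Lmat α (n+1)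
          + (jacobiM α (n+1)) ^ (2*n-1) * Rmat α (n+1) := by
      have h1 : (jacobiM α (n+1)) ^ (2*n)
          = (jacobiM α (n+1)) ^ (2*n-1) * jacobiM α (n+1) := by
        rw [← pow_succ]
        congr 1
        omega
      rw [h1]
      nth_rewrite 2 [jacobi_split α (n+1)]
      rw [mul_add]
    calc u α n = ((jacobiM α (n+1)) ^ (2*n)) 0 0 := rfl
      _ = ((jacobiM α (n+1)) ^ (2*n-1) * Lmat α (n+1)) 0 0
          + ((jacobiM α (n+1)) ^ (2*n-1) * Rmat α (n+1)) 0 0 := by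
            rw [hsplit, Matrix.add_apply]
      _ = ((jacobiM α (n+1)) ^ (2*n-1) * Lmat α (n+1)) 0 0 := by rw [hR0, add_zero]
      _ = (Lmat α (n+1) * (jacobiM α (n+1)) ^ (2*n-1)) 0 0
          + ∑ j ∈ Finset.range (2*n-1),
              ((jacobiM α (n+1)) ^ j
                * (Rmat α (n+1) * Lmat α (n+1) - Lmat α (n+1) * Rmat α (n+1))
                * (jacobiM α (n+1)) ^ (2*n-1-1-j)) 0 0 := by
            rw [htel, Matrix.add_apply, Matrix.sum_apply]
      _ = ∑ j ∈ Finset.range (2*n-1),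
            (u α (n-1) + α * (((jacobiM α (n+1))^j) 0 0 * ((jacobiM α (n+1))^(2*n-2-j)) 0 0)) := by
            rw [hL0, zero_add]
            exact Finset.sum_congr rfl key
      _ = (2 * (n : ℝ) - 1) * u α (n - 1)
          + α * ∑ i ∈ Finset.range n, u α i * u α (n - 1 - i) := by
            rw [Finset.sum_add_distrib, Finset.sum_const, Finset.card_range, ← Finset.mul_sum, hg,
              nsmul_eq_mul]
            congr 2
            push_cast [Nat.cast_sub (show 1 ≤ 2*n from by omega)]
            ring
  · simp [u, Matrix.one_apply]
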